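/- Let ω : (0,1] → [0,∞), α > 0, λ ∈ (0,1), and C₀ > 0, and suppose that ω(βr) ≤ C₀ ω(r) for all r ∈ (0,1] and β ∈ [λ,1]. Then for every r ∈ (0,λ], sup_{ρ ∈ [r,λ]} ω(ρ)/ρ^α ≤ C₃ ∫_r^1 ω(ρ)/ρ^{1+α} dρ, where C₃ = C₀ / ((1-λ) λ^α). -/

import Mathlib

open MeasureTheory Set Filter

/-- Step-2 estimate of the Dini lemma: for a quasi-monotone nonnegative ω,
`sup_{ρ∈[r,λ]} ω(ρ)/ρ^α ≤ C₃ ∫_r^1 ω(ρ)/ρ^{1+α} dρ` with `C₃ = C₀/((1-λ)λ^α)`.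
The supremum bound is expressed as a bound valid for every `ρ ∈ [r,λ]`. -/
theorem sup_omega_integral_bound (ω : ℝ → ℝ) (α lam C₀ : ℝ)
    (hα : 0 < α) (hlam : lam ∈ Set.Ioo (0:ℝ) 1) (hC₀ : 0 < C₀)
    (hω0 : ∀ r ∈ Set.Ioc (0:ℝ) 1, 0 ≤ ω r)
    (hquasi : ∀ r ∈ Set.Ioc (0:ℝ) 1, ∀ β ∈ Set.Icc lam 1, ω (β * r) ≤ C₀ * ω r) :
    ∀ r ∈ Set.Ioc (0:ℝ) lam, ∀ ρ ∈ Set.Icc r lam,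
      ENNReal.ofReal (ω ρ / ρ ^ α) ≤
        ENNReal.ofReal (C₀ / ((1 - lam) * lam ^ α)) *
          ∫⁻ s in Set.Ioc r 1, ENNReal.ofReal (ω s / s ^ (1 + α)) := by
  intro r hr ρ hρ
  obtain ⟨hr0, hrlam⟩ := hr
  obtain ⟨hrρ, hρlam⟩ := hρ
  obtain ⟨hlam0, hlam1⟩ := hlam
  have hρ0 : 0 < ρ := lt_of_lt_of_le hr0 hrρ
  have hρ1 : ρ ≤ 1 := hρlam.trans hlam1.le
  set b : ℝ := ρ / lam with hb
  have hρb : ρ < b := by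
    rw [hb, lt_div_iff₀ hlam0]; nlinarith
  have hb1 : b ≤ 1 := by rw [hb, div_le_one hlam0]; exact hρlam
  have hωρ : 0 ≤ ω ρ := hω0 ρ ⟨hρ0, hρ1⟩
  have hA : (0:ℝ) < ρ ^ α := Real.rpow_pos_of_pos hρ0 _
  have hL : (0:ℝ) < lam ^ α := Real.rpow_pos_of_pos hlam0 _
  have hb0 : 0 < b := hρ0.trans hρb
  have hB : (0:ℝ) < b ^ (1 + α) := Real.rpow_pos_of_pos hb0 _
  set K : ℝ := ω ρ / C₀ / b ^ (1 + α) with hK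
  have hKnn : 0 ≤ K := by positivity
  set C₃ : ℝ := C₀ / ((1 - lam) * lam ^ α) with hC₃
  have hC₃nn : 0 ≤ C₃ := by
    apply div_nonneg hC₀.le
    have : (0:ℝ) < 1 - lam := by linarith
    positivity
  -- pointwise lower bound on Ioc ρ b
  have hpt : ∀ s ∈ Set.Ioc ρ b, ENNReal.ofReal K ≤ ENNReal.ofReal (ω s / s ^ (1 + α)) := by
    intro s hs
    obtain ⟨hρs, hsb⟩ := hs
    have hs0 : 0 < s := hρ0.trans hρs
    have hs1 : s ≤ 1 := hsb.trans hb1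
    have hβ : ρ / s ∈ Set.Icc lam 1 := by
      constructor
      · rw [le_div_iff₀ hs0]
        calc lam * s ≤ lam * b := by nlinarith
          _ = ρ := by rw [hb]; field_simp
      · rw [div_le_one hs0]; exact hρs.le
    have hq := hquasi s ⟨hs0, hs1⟩ (ρ / s) hβ
    rw [div_mul_cancel₀ _ hs0.ne'] at hq
    have hωs : ω ρ / C₀ ≤ ω s := (div_le_iff₀ hC₀).2 (by linarith [hq])
    have hsB : s ^ (1 + α) ≤ b ^ (1 + α) :=
      Real.rpow_le_rpow hs0.le hsb (by linarith)
    have hsBpos : (0:ℝ) < s ^ (1 + α) := Real.rpow_pos_of_pos hs0 _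
    apply ENNReal.ofReal_le_ofReal
    calc K = ω ρ / C₀ / b ^ (1 + α) := hK
      _ ≤ ω ρ / C₀ / s ^ (1 + α) := by gcongr
      _ ≤ ω s / s ^ (1 + α) := by gcongr
  -- the key real identity
  have hkey : ω ρ / ρ ^ α = C₃ * (K * (b - ρ)) := by
    have hρ1α : ρ ^ (1 + α) = ρ * ρ ^ α := by
      rw [Real.rpow_add hρ0, Real.rpow_one]
    have hlam1α : lam ^ (1 + α) = lam * lam ^ α := by
      rw [Real.rpow_add hlam0, Real.rpow_one]
    have hB' : b ^ (1 + α) = ρ ^ (1 + α) / lam ^ (1 + α) := by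
      rw [hb, Real.div_rpow hρ0.le hlam0.le]
    have h1lam : (0:ℝ) < 1 - lam := by linarith
    rw [hC₃, hK, hB', hρ1α, hlam1α, hb]
    field_simp
  rw [hkey, ENNReal.ofReal_mul hC₃nn, ENNReal.ofReal_mul hKnn]
  have hsub : Set.Ioc ρ b ⊆ Set.Ioc r 1 := Set.Ioc_subset_Ioc hrρ hb1
  refine mul_le_mul_right ?_ _
  calc ENNReal.ofReal K * ENNReal.ofReal (b - ρ)
      = ∫⁻ _ in Set.Ioc ρ b, ENNReal.ofReal K := by
        rw [setLIntegral_const, Real.volume_Ioc]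
    _ ≤ ∫⁻ s in Set.Ioc ρ b, ENNReal.ofReal (ω s / s ^ (1 + α)) := by
        refine lintegral_mono_ae ?_
        exact (ae_restrict_iff' measurableSet_Ioc).2 (Filter.Eventually.of_forall hpt)
    _ ≤ ∫⁻ s in Set.Ioc r 1, ENNReal.ofReal (ω s / s ^ (1 + α)) :=
        lintegral_mono_set hsub
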